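/- Strict monotonicity of the distortion expression on the interior of 𝒟3 (Lemma 5): Let σ²>0 and ρ∈(0,1). Define, for 0<D1<σ² and 0<D2≤σ², F(D1,D2) = σ²·(2ρ√((σ²−D1)(σ²−D2)) + D1 + D2 − σ²(1+ρ²))/D2. Then F is strictly increasing in its first argument on the interior of 𝒟3: if (D1,D2) and (D1',D2) both lie in the interior of 𝒟3 and D1 < D1', then F(D1,D2) < F(D1',D2). -/
import Mathlib


/-- Region 𝒟₃ of distortion pairs. -/
def regD3 (σsq ρ : ℝ) : Set (ℝ × ℝ) :=
  {p | (0 ≤ p.1 ∧ p.1 ≤ σsq * (1 - ρ ^ 2) ∧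
        (σsq * (1 - ρ ^ 2) - p.1) * σsq / (σsq - p.1) ≤ p.2 ∧
        p.2 < σsq * (1 - ρ ^ 2) + ρ ^ 2 * p.1) ∨
       (σsq * (1 - ρ ^ 2) < p.1 ∧ p.1 ≤ σsq ∧
        (p.1 - σsq * (1 - ρ ^ 2)) / ρ ^ 2 < p.2 ∧ p.2 < σsq * (1 - ρ ^ 2) + ρ ^ 2 * p.1)}

/-- The limiting distortion expression of the auxiliary estimator. -/
noncomputable def Fdist (σsq ρ D1 D2 : ℝ) : ℝ :=
  σsq * (2 * ρ * Real.sqrt ((σsq - D1) * (σsq - D2)) + D1 + D2 - σsq * (1 + ρ ^ 2)) / D2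

/-- **Lemma 5 (strict monotonicity of the distortion expression on `int 𝒟₃`).**
`F` is strictly increasing in its first argument on the interior of 𝒟₃. -/
theorem Fdist_strictMono_on_interior_D3
    (σsq ρ D1 D1' D2 : ℝ)
    (hσ : 0 < σsq) (hρ0 : 0 < ρ) (hρ1 : ρ < 1)
    (h1 : (D1, D2) ∈ interior (regD3 σsq ρ))
    (h2 : (D1', D2) ∈ interior (regD3 σsq ρ))
    (hlt : D1 < D1') :
    Fdist σsq ρ D1 D2 < Fdist σsq ρ D1' D2 := by
  have hρ2 : (0:ℝ) < ρ ^ 2 := by positivity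
  have hmem2 : (D1', D2) ∈ regD3 σsq ρ := interior_subset h2
  -- D2 > 0 from interior
  have hD2pos : 0 < D2 := by
    rcases Metric.isOpen_iff.mp isOpen_interior _ h1 with ⟨ε, hε, hball⟩
    have hmemε : (D1, D2 - ε/2) ∈ regD3 σsq ρ := by
      refine interior_subset (hball ?_)
      have : dist ((D1, D2 - ε/2) : ℝ × ℝ) (D1, D2) = ε/2 := by
        rw [Prod.dist_eq]
        simp [Real.dist_eq, abs_of_nonneg, hε.le, abs_of_nonpos, show D2 - ε/2 - D2 = -(ε/2) by ring]
        positivity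
      rw [Metric.mem_ball, this]
      linarith
    rcases hmemε with ⟨h0, hle, hlb, _⟩ | ⟨hgt, _, hlb, _⟩
    · have hden : 0 < σsq - D1 := by nlinarith
      have hnum : 0 ≤ (σsq * (1 - ρ ^ 2) - D1) * σsq := by nlinarith
      have := div_nonneg hnum hden.le
      simp only at hlb
      linarith
    · have : 0 < (D1 - σsq * (1 - ρ ^ 2)) / ρ ^ 2 := div_pos (by nlinarith) hρ2
      simp only at hlb
      linarith
  -- basic bounds from membership of (D1', D2)
  have hD1'le : D1' ≤ σsq := by
    rcases hmem2 with ⟨_, hle, _⟩ | ⟨_, hle, _⟩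
    · nlinarith
    · exact hle
  have hkey : D1' < σsq * (1 - ρ ^ 2) + ρ ^ 2 * D2 := by
    rcases hmem2 with ⟨_, hle, _⟩ | ⟨_, _, hlb, _⟩
    · nlinarith
    · have := (div_lt_iff₀ hρ2).mp hlb
      nlinarith
  have hD2lt : D2 < σsq := by
    rcases hmem2 with ⟨_, _, _, hub⟩ | ⟨_, _, _, hub⟩ <;> nlinarith
  -- set up square roots
  have ha' : (0:ℝ) ≤ σsq - D1' := by linarith
  have ha : (0:ℝ) ≤ σsq - D1 := by linarith
  have hc : (0:ℝ) ≤ σsq - D2 := by linarith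
  set s := Real.sqrt (σsq - D1) with hs_def
  set s' := Real.sqrt (σsq - D1') with hs'_def
  set t := Real.sqrt (σsq - D2) with ht_def
  have hs_sq : s ^ 2 = σsq - D1 := Real.sq_sqrt ha
  have hs'_sq : s' ^ 2 = σsq - D1' := Real.sq_sqrt ha'
  have ht_sq : t ^ 2 = σsq - D2 := Real.sq_sqrt hc
  have hs'_nonneg : 0 ≤ s' := Real.sqrt_nonneg _
  have ht_nonneg : 0 ≤ t := Real.sqrt_nonneg _
  have hss' : s' < s := by
    apply Real.sqrt_lt_sqrt ha'
    linarith
  have hρt : ρ * t < s' := by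
    have h1 : (ρ * t) ^ 2 < s' ^ 2 := by
      rw [hs'_sq]
      have : (ρ * t) ^ 2 = ρ ^ 2 * (σsq - D2) := by rw [mul_pow, ht_sq]
      rw [this]; nlinarith
    nlinarith [mul_nonneg hρ0.le ht_nonneg]
  -- key inequality on numerators
  have hK : 2 * ρ * (s * t) + D1 < 2 * ρ * (s' * t) + D1' := by
    have hD1eq : D1 = σsq - s ^ 2 := by linarith
    have hD1'eq : D1' = σsq - s' ^ 2 := by linarith
    rw [hD1eq, hD1'eq]
    nlinarith [mul_pos (sub_pos.mpr hss') (show (0:ℝ) < s + s' - 2 * ρ * t by nlinarith)]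
  unfold Fdist
  rw [Real.sqrt_mul ha, Real.sqrt_mul ha', ← hs_def, ← hs'_def, ← ht_def,
    div_lt_div_iff₀ hD2pos hD2pos]
  nlinarith [mul_pos hσ hD2pos, hK]
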